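/- Let K := [m_1,M_1] × … × [m_{k-1},M_{k-1}] ⊂ ℝ^{k-1} with m_j ≤ M_j, and let f : K → [m_k, M_k] be continuously differentiable with ∂f/∂u_i (u) ≤ 0 for all u ∈ K and all i = 1,…,k−1. Then the (k−1)-dimensional area of the graph of f satisfies ∫_K √(‖∇f(u)‖₂² + 1) du ≤ ∑_{i=1}^k ∏_{j=1, j≠i}^k (M_j − m_j). -/

import Mathlib

open MeasureTheory Set Finset

lemma erase_eq_image_succAbove {n : ℕ} (i : Fin (n + 1)) :
    Finset.univ.erase i = Finset.image i.succAbove Finset.univ := by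
  ext j
  simp only [Finset.mem_erase, Finset.mem_univ, and_true, Finset.mem_image, true_and]
  constructor
  · intro hj; exact Fin.exists_succAbove_eq hj
  · rintro ⟨k, rfl⟩; exact Fin.succAbove_ne i k

lemma prod_erase_eq_prod_succAbove {n : ℕ} (i : Fin (n + 1)) (h : Fin (n + 1) → ℝ) :
    ∏ j ∈ Finset.univ.erase i, h j = ∏ j : Fin n, h (i.succAbove j) := by
  rw [erase_eq_image_succAbove, Finset.prod_image]
  intro x _ y _ hxy
  exact (Fin.succAbove_right_injective (p := i)) hxy

lemma key_div {n : ℕ} (a b : Fin (n + 1) → ℝ) (hab : a ≤ b)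
    (g : (Fin (n + 1) → ℝ) → ℝ) (hg : ContDiff ℝ 1 g) (c C : ℝ)
    (hr : ∀ x ∈ Set.Icc a b, g x ∈ Set.Icc c C) (i : Fin (n + 1)) :
    ∫ x in Set.Icc a b, -fderiv ℝ g x (Pi.single i 1) ≤
      (C - c) * ∏ j ∈ Finset.univ.erase i, (b j - a j) := by
  have hgc : Continuous g := hg.continuous
  have hP : Continuous fun x => fderiv ℝ g x (Pi.single i 1) :=
    (hg.continuous_fderiv one_ne_zero).clm_apply continuous_const
  have hab' : (a ∘ i.succAbove) ≤ (b ∘ i.succAbove) := fun j => hab _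
  have hdvg := MeasureTheory.integral_divergence_of_hasFDerivAt_off_countable' a b hab
      (fun j x => if j = i then g x else 0)
      (fun j x => if j = i then fderiv ℝ g x else 0) ∅ Set.countable_empty
      (fun j => by
        by_cases h : j = i <;> simp [h, hgc.continuousOn, continuousOn_const])
      (fun x _ j => by
        by_cases h : j = i
        · simpa [h] using ((hg.differentiable one_ne_zero) x).hasFDerivAt
        · simpa [h] using hasFDerivAt_const (0 : ℝ) x)
      (by
        apply ContinuousOn.integrableOn_compact isCompact_Icc
        apply Continuous.continuousOn
        have : ∀ x, ∑ j, (if j = i then fderiv ℝ g x else 0) (Pi.single j 1)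
            = fderiv ℝ g x (Pi.single i 1) := by
          intro x
          rw [Finset.sum_eq_single i] <;> simp +contextual
        simpa only [this] using hP)
  have hsum : ∀ x, ∑ j, (if j = i then fderiv ℝ g x else 0) (Pi.single j 1)
      = fderiv ℝ g x (Pi.single i 1) := by
    intro x
    rw [Finset.sum_eq_single i] <;> simp +contextual
  have h1 : ∫ x in Set.Icc a b, fderiv ℝ g x (Pi.single i 1)
      = (∫ x in Set.Icc (a ∘ i.succAbove) (b ∘ i.succAbove), g (i.insertNth (b i) x))
        - ∫ x in Set.Icc (a ∘ i.succAbove) (b ∘ i.succAbove), g (i.insertNth (a i) x) := by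
    rw [show (fun x => fderiv ℝ g x (Pi.single i 1))
        = fun x => ∑ j, (if j = i then fderiv ℝ g x else 0) (Pi.single j 1) from
        funext fun x => (hsum x).symm, hdvg, Finset.sum_eq_single i]
    · simp
    · intro j _ hj; simp [hj]
    · simp
  set V : ℝ := (volume (Set.Icc (a ∘ i.succAbove) (b ∘ i.succAbove))).toReal with hV
  have hVface : V = ∏ j : Fin n, (b (i.succAbove j) - a (i.succAbove j)) := by
    rw [hV, Real.volume_Icc_pi_toReal hab']
    rfl
  have hVnn : (0:ℝ) ≤ V := ENNReal.toReal_nonneg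
  have hback_mem : ∀ x ∈ Set.Icc (a ∘ i.succAbove) (b ∘ i.succAbove),
      i.insertNth (a i) x ∈ Set.Icc a b := fun x hx =>
    Fin.insertNth_mem_Icc.2 ⟨⟨le_refl _, hab i⟩, hx⟩
  have hfront_mem : ∀ x ∈ Set.Icc (a ∘ i.succAbove) (b ∘ i.succAbove),
      i.insertNth (b i) x ∈ Set.Icc a b := fun x hx =>
    Fin.insertNth_mem_Icc.2 ⟨⟨hab i, le_refl _⟩, hx⟩
  have hcont_back : Continuous fun x => g (i.insertNth (a i) x) :=
    hgc.comp (Continuous.finInsertNth i continuous_const continuous_id)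
  have hcont_front : Continuous fun x => g (i.insertNth (b i) x) :=
    hgc.comp (Continuous.finInsertNth i continuous_const continuous_id)
  have hbound_back : (∫ x in Set.Icc (a ∘ i.succAbove) (b ∘ i.succAbove),
      g (i.insertNth (a i) x)) ≤ C * V := by
    calc (∫ x in Set.Icc (a ∘ i.succAbove) (b ∘ i.succAbove), g (i.insertNth (a i) x))
        ≤ ∫ _x in Set.Icc (a ∘ i.succAbove) (b ∘ i.succAbove), C := by
          apply setIntegral_mono_on
          · exact hcont_back.continuousOn.integrableOn_compact isCompact_Icc
          · exact integrableOn_const (isCompact_Icc.measure_lt_top).ne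
          · exact measurableSet_Icc
          · exact fun x hx => (hr _ (hback_mem x hx)).2
      _ = C * V := by rw [setIntegral_const, measureReal_def]; rw [smul_eq_mul]; ring
  have hbound_front : c * V ≤ ∫ x in Set.Icc (a ∘ i.succAbove) (b ∘ i.succAbove),
      g (i.insertNth (b i) x) := by
    calc c * V = ∫ _x in Set.Icc (a ∘ i.succAbove) (b ∘ i.succAbove), c := by
          rw [setIntegral_const, measureReal_def]; rw [smul_eq_mul]; ring
      _ ≤ _ := by
          apply setIntegral_mono_on
          · exact integrableOn_const (isCompact_Icc.measure_lt_top).ne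
          · exact hcont_front.continuousOn.integrableOn_compact isCompact_Icc
          · exact measurableSet_Icc
          · exact fun x hx => (hr _ (hfront_mem x hx)).1
  have h2 : ∫ x in Set.Icc a b, -fderiv ℝ g x (Pi.single i 1)
      = -(∫ x in Set.Icc a b, fderiv ℝ g x (Pi.single i 1)) := integral_neg _
  rw [h2, h1, prod_erase_eq_prod_succAbove, ← hVface]
  nlinarith

open MeasureTheory Set Finset

section aux

lemma sqrt_sum_sq_add_one_le {ι : Type*} [Fintype ι] (p : ι → ℝ) :
    Real.sqrt (∑ i, p i ^ 2 + 1) ≤ ∑ i, |p i| + 1 := by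
  have hnn : (0:ℝ) ≤ ∑ i, |p i| := Finset.sum_nonneg fun i _ => abs_nonneg _
  rw [show ∑ i, |p i| + 1 = Real.sqrt ((∑ i, |p i| + 1) ^ 2) from
    (Real.sqrt_sq (by positivity)).symm]
  apply Real.sqrt_le_sqrt
  have h1 : ∑ i, p i ^ 2 ≤ (∑ i, |p i|) ^ 2 := by
    calc ∑ i, p i ^ 2 = ∑ i, |p i| ^ 2 := by simp [sq_abs]
      _ ≤ (∑ i, |p i|) ^ 2 := Finset.sum_sq_le_sq_sum_of_nonneg fun i _ => abs_nonneg _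
  nlinarith

lemma prod_erase_last {d : ℕ} (h : Fin (d + 1) → ℝ) :
    ∏ j ∈ Finset.univ.erase (Fin.last d), h j = ∏ j : Fin d, h j.castSucc := by
  have : Finset.univ.erase (Fin.last d) = Finset.image Fin.castSucc Finset.univ := by
    ext j
    simp only [Finset.mem_erase, Finset.mem_univ, and_true, Finset.mem_image, true_and]
    constructor
    · intro hj; exact Fin.exists_castSucc_eq.2 hj
    · rintro ⟨k, rfl⟩; exact (Fin.castSucc_lt_last k).ne
  rw [this, Finset.prod_image fun x _ y _ hxy => Fin.castSucc_injective _ hxy]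

lemma prod_erase_castSucc {d : ℕ} (h : Fin (d + 1) → ℝ) (i : Fin d) :
    ∏ j ∈ Finset.univ.erase i.castSucc, h j
      = h (Fin.last d) * ∏ j ∈ Finset.univ.erase i, h j.castSucc := by
  have hset : Finset.univ.erase i.castSucc
      = insert (Fin.last d) (Finset.image Fin.castSucc (Finset.univ.erase i)) := by
    ext j
    simp only [Finset.mem_erase, Finset.mem_univ, and_true, Finset.mem_insert,
      Finset.mem_image, true_and]
    constructor
    · intro hj
      rcases eq_or_ne j (Fin.last d) with h' | h'
      · exact Or.inl h'
      · obtain ⟨k, rfl⟩ := Fin.exists_castSucc_eq.2 h'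
        exact Or.inr ⟨k, fun hk => hj (by rw [hk]), rfl⟩
    · rintro (rfl | ⟨k, hk, rfl⟩)
      · exact ((Fin.castSucc_lt_last i).ne).symm
      · exact fun hc => hk (Fin.castSucc_injective _ hc)
  rw [hset, Finset.prod_insert, Finset.prod_image fun x _ y _ hxy => Fin.castSucc_injective _ hxy]
  simp only [Finset.mem_image]
  rintro ⟨k, _, hk⟩
  exact (Fin.castSucc_lt_last k).ne hk

end aux

lemma key_div' {d : ℕ} (a b : Fin d → ℝ) (hab : a ≤ b)
    (g : (Fin d → ℝ) → ℝ) (hg : ContDiff ℝ 1 g) (c C : ℝ)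
    (hr : ∀ x ∈ Set.Icc a b, g x ∈ Set.Icc c C) (i : Fin d) :
    ∫ x in Set.Icc a b, -fderiv ℝ g x (Pi.single i 1) ≤
      (C - c) * ∏ j ∈ Finset.univ.erase i, (b j - a j) := by
  cases d with
  | zero => exact i.elim0
  | succ n => exact key_div a b hab g hg c C hr i

theorem stmt_11 {d : ℕ} (m M : Fin (d + 1) → ℝ) (hmM : ∀ j, m j ≤ M j)
    (f : EuclideanSpace ℝ (Fin d) → ℝ) (hf : ContDiff ℝ 1 f)
    (K : Set (EuclideanSpace ℝ (Fin d)))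
    (hK : K = (WithLp.ofLp : EuclideanSpace ℝ (Fin d) → (Fin d → ℝ)) ⁻¹'
      (Set.univ.pi fun j : Fin d => Set.Icc (m j.castSucc) (M j.castSucc)))
    (hrange : ∀ u ∈ K, f u ∈ Set.Icc (m (Fin.last d)) (M (Fin.last d)))
    (hmono : ∀ u ∈ K, ∀ i : Fin d, fderiv ℝ f u (EuclideanSpace.single i 1) ≤ 0) :
    ∫ u in K, Real.sqrt (‖gradient f u‖ ^ 2 + 1) ≤
      ∑ i : Fin (d + 1), ∏ j ∈ Finset.univ.erase i, (M j - m j) := by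
  classical
  set c := m (Fin.last d) with hc
  set C := M (Fin.last d) with hC
  set a : Fin d → ℝ := fun j => m j.castSucc with ha
  set b : Fin d → ℝ := fun j => M j.castSucc with hb
  have hab : a ≤ b := fun j => hmM _
  set L := PiLp.continuousLinearEquiv 2 ℝ (fun _ : Fin d => ℝ) with hL
  set g : (Fin d → ℝ) → ℝ := fun y => f (L.symm y) with hgdef
  have hg : ContDiff ℝ 1 g := hf.comp (L.symm : (Fin d → ℝ) ≃L[ℝ] _).contDiff
  have hfder : ∀ (y : Fin d → ℝ) (i : Fin d),
      fderiv ℝ g y (Pi.single i 1) = fderiv ℝ f (L.symm y) (EuclideanSpace.single i 1) := by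
    intro y i
    rw [show g = f ∘ L.symm from rfl, L.symm.comp_right_fderiv]
    rfl
  have hmem : ∀ y ∈ Set.Icc a b, (L.symm y) ∈ K := by
    intro y hy
    rw [hK]
    exact Set.mem_univ_pi.2 fun j => ⟨hy.1 j, hy.2 j⟩
  -- gradient norm squared as sum of partials
  have hgrad : ∀ u : EuclideanSpace ℝ (Fin d),
      ‖gradient f u‖ ^ 2 = ∑ i, (fderiv ℝ f u (EuclideanSpace.single i 1)) ^ 2 := by
    intro u
    have h1 : ∀ i, fderiv ℝ f u (EuclideanSpace.single i 1) = gradient f u i := by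
      intro i
      have h2 : fderiv ℝ f u
          = InnerProductSpace.toDual ℝ (EuclideanSpace ℝ (Fin d)) (gradient f u) :=
        ((InnerProductSpace.toDual ℝ _).apply_symm_apply _).symm
      rw [h2, InnerProductSpace.toDual_apply_apply, EuclideanSpace.inner_single_right]
      simp
    rw [EuclideanSpace.norm_eq, Real.sq_sqrt (by positivity)]
    simp [h1, sq_abs, Real.norm_eq_abs]
  -- transfer integral to the pi space
  set e := (MeasurableEquiv.toLp 2 (Fin d → ℝ)).symm with he
  have hLe : ∀ u, L.symm (e u) = u := fun u => rfl
  have htrans : ∫ u in K, Real.sqrt (‖gradient f u‖ ^ 2 + 1)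
      = ∫ y in Set.Icc a b, Real.sqrt (∑ i, (fderiv ℝ g y (Pi.single i 1)) ^ 2 + 1) := by
    have hKeq : e ⁻¹' (Set.Icc a b) = K := by
      rw [hK]; ext u
      constructor
      · intro hu j _
        exact ⟨hu.1 j, hu.2 j⟩
      · intro hu
        exact ⟨fun j => (hu j (Set.mem_univ j)).1, fun j => (hu j (Set.mem_univ j)).2⟩
    rw [← hKeq]
    rw [← (EuclideanSpace.volume_preserving_symm_measurableEquiv_toLp (Fin d)).setIntegral_preimage_emb
      (MeasurableEquiv.toLp 2 (Fin d → ℝ)).symm.measurableEmbedding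
      (fun y => Real.sqrt (∑ i, (fderiv ℝ g y (Pi.single i 1)) ^ 2 + 1)) _]
    apply setIntegral_congr_fun ((measurableSet_Icc).preimage e.measurable)
    intro u _
    show Real.sqrt (‖gradient f u‖ ^ 2 + 1)
      = Real.sqrt (∑ i, (fderiv ℝ g (e u)) (Pi.single i 1) ^ 2 + 1)
    rw [hgrad u]
    congr 2
    exact Finset.sum_congr rfl fun i _ => by rw [hfder, hLe]
  set P : Fin d → (Fin d → ℝ) → ℝ := fun i y => fderiv ℝ g y (Pi.single i 1) with hP
  have hPcont : ∀ i, Continuous (P i) := fun i =>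
    (hg.continuous_fderiv one_ne_zero).clm_apply continuous_const
  have hPle : ∀ y ∈ Set.Icc a b, ∀ i, P i y ≤ 0 := fun y hy i => by
    rw [hP]; simp only []; rw [hfder]; exact hmono _ (hmem y hy) i
  have hgr : ∀ y ∈ Set.Icc a b, g y ∈ Set.Icc c C := fun y hy => hrange _ (hmem y hy)
  -- pointwise bound
  have hpt : ∀ y ∈ Set.Icc a b,
      Real.sqrt (∑ i, (P i y) ^ 2 + 1) ≤ 1 + ∑ i, -(P i y) := by
    intro y hy
    calc Real.sqrt (∑ i, (P i y) ^ 2 + 1) ≤ ∑ i, |P i y| + 1 :=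
          sqrt_sum_sq_add_one_le _
      _ = 1 + ∑ i, -(P i y) := by
          rw [add_comm]
          congr 1
          exact Finset.sum_congr rfl fun i _ => abs_of_nonpos (hPle y hy i)
  have hint1 : IntegrableOn (fun y => Real.sqrt (∑ i, (P i y) ^ 2 + 1)) (Set.Icc a b) := by
    have hcont : Continuous fun y => Real.sqrt (∑ i, (P i y) ^ 2 + 1) :=
      Real.continuous_sqrt.comp
        ((continuous_finset_sum _ fun i _ => (hPcont i).pow 2).add continuous_const)
    exact hcont.continuousOn.integrableOn_compact isCompact_Icc
  have hint2 : ∀ i : Fin d, IntegrableOn (fun y => -(P i y)) (Set.Icc a b) :=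
    fun i => ((hPcont i).neg.continuousOn).integrableOn_compact isCompact_Icc
  set V0 : ℝ := (volume (Set.Icc a b)).toReal with hV0
  have step1 : ∫ y in Set.Icc a b, Real.sqrt (∑ i, (P i y) ^ 2 + 1)
      ≤ ∫ y in Set.Icc a b, (1 + ∑ i, -(P i y)) := by
    apply setIntegral_mono_on hint1 ?_ measurableSet_Icc hpt
    exact (integrableOn_const isCompact_Icc.measure_lt_top.ne).add
      (integrable_finset_sum _ fun i _ => hint2 i)
  have step2 : ∫ y in Set.Icc a b, (1 + ∑ i, -(P i y))
      = V0 + ∑ i, ∫ y in Set.Icc a b, -(P i y) := by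
    rw [integral_add (integrableOn_const (C := (1:ℝ)) isCompact_Icc.measure_lt_top.ne)
      (integrable_finset_sum _ fun i _ => hint2 i),
      integral_finset_sum _ fun i _ => hint2 i, setIntegral_const, measureReal_def, smul_eq_mul, mul_one]
  have step3 : ∀ i : Fin d, ∫ y in Set.Icc a b, -(P i y)
      ≤ (C - c) * ∏ j ∈ Finset.univ.erase i, (b j - a j) :=
    fun i => key_div' a b hab g hg c C hgr i
  have hV0eq : V0 = ∏ j : Fin d, (b j - a j) := Real.volume_Icc_pi_toReal hab
  -- assemble
  rw [htrans, Fin.sum_univ_castSucc (f := fun i => ∏ j ∈ Finset.univ.erase i, (M j - m j)),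
    prod_erase_last]
  have final : V0 + ∑ i : Fin d, (C - c) * ∏ j ∈ Finset.univ.erase i, (b j - a j)
      = (∑ i : Fin d, ∏ j ∈ Finset.univ.erase i.castSucc, (M j - m j))
        + ∏ j : Fin d, (M j.castSucc - m j.castSucc) := by
    rw [hV0eq, add_comm]
    congr 1
    exact Finset.sum_congr rfl fun i _ => (prod_erase_castSucc (fun j => M j - m j) i).symm
  calc ∫ y in Set.Icc a b, Real.sqrt (∑ i, (P i y) ^ 2 + 1)
      ≤ V0 + ∑ i, ∫ y in Set.Icc a b, -(P i y) := step1.trans (le_of_eq step2)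
    _ ≤ V0 + ∑ i : Fin d, (C - c) * ∏ j ∈ Finset.univ.erase i, (b j - a j) := by
        gcongr with i _
        exact step3 i
    _ = _ := final
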